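/- The antipode S of the Connes–Moscovici algebra satisfies the first Hopf algebroid antipode axiom μ_H(S ⊗ id)Δ_l = s_r ε_r; explicitly, for all a, b ∈ A and q ∈ Q: Σ S(a ⊗ q₍₁₎ ⊗ 1)·(1 ⊗ q₍₂₎ ⊗ b) = 1 ⊗ 1 ⊗ T(q)·(ba), where the product is taken in H. -/

import Mathlib

open TensorProduct

noncomputable section

/-- `(id ⊗ Δ) ∘ Δ : Q → Q ⊗ (Q ⊗ Q)`, producing the Sweedler legs
`q₍₁₎ ⊗ q₍₂₎ ⊗ q₍₃₎` of the iterated coproduct. -/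
def comul2 (Q : Type*) [Ring Q] [HopfAlgebra ℂ Q] :
    Q →ₗ[ℂ] Q ⊗[ℂ] (Q ⊗[ℂ] Q) :=
  (LinearMap.lTensor Q (Coalgebra.comul (R := ℂ))).comp (Coalgebra.comul (R := ℂ))

/-- The right-hand side `Σ a (q₍₁₎·a') ⊗ q₍₂₎ q' ⊗ (q₍₃₎·b') b` of the
Connes–Moscovici product formula on `H = A ⊗ Q ⊗ A`. -/
def cmMulRHS {Q A : Type*} [Ring Q] [HopfAlgebra ℂ Q] [Ring A] [Algebra ℂ A]
    (act : Q →ₗ[ℂ] A →ₗ[ℂ] A) (a : A) (q : Q) (b : A) (a' : A) (q' : Q) (b' : A) :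
    A ⊗[ℂ] (Q ⊗[ℂ] A) :=
  TensorProduct.map ((LinearMap.mulLeft ℂ a).comp (act.flip a'))
    (TensorProduct.map (LinearMap.mulRight ℂ q')
      ((LinearMap.mulRight ℂ b).comp (act.flip b')))
    (comul2 Q q)

/-- The order-reversing map `A ⊗ (Q ⊗ A) → A ⊗ (Q ⊗ A)`, `x ⊗ y ⊗ z ↦ z ⊗ y ⊗ x`. -/
def cmRev {Q A : Type*} [Ring Q] [HopfAlgebra ℂ Q] [Ring A] [Algebra ℂ A] :
    (A ⊗[ℂ] (Q ⊗[ℂ] A)) →ₗ[ℂ] (A ⊗[ℂ] (Q ⊗[ℂ] A)) :=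
  (TensorProduct.congr (LinearEquiv.refl ℂ A) (TensorProduct.comm ℂ Q A) ≪≫ₗ
    (TensorProduct.assoc ℂ A A Q).symm ≪≫ₗ
    TensorProduct.congr (TensorProduct.comm ℂ A A) (LinearEquiv.refl ℂ Q) ≪≫ₗ
    TensorProduct.assoc ℂ A A Q ≪≫ₗ
    TensorProduct.congr (LinearEquiv.refl ℂ A) (TensorProduct.comm ℂ A Q)).toLinearMap

/-- The value `Σ T(q₍₃₎)·b ⊗ T(q₍₂₎) ⊗ T(q₍₁₎)·a` of the antipode of the
Connes–Moscovici algebra on an elementary tensor `a ⊗ q ⊗ b`. -/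
def cmAntipodeRHS {Q A : Type*} [Ring Q] [HopfAlgebra ℂ Q] [Ring A] [Algebra ℂ A]
    (act : Q →ₗ[ℂ] A →ₗ[ℂ] A) (a : A) (q : Q) (b : A) :
    A ⊗[ℂ] (Q ⊗[ℂ] A) :=
  cmRev
    (TensorProduct.map ((act.flip a).comp (HopfAlgebra.antipode (R := ℂ)))
      (TensorProduct.map (HopfAlgebra.antipode (R := ℂ))
        ((act.flip b).comp (HopfAlgebra.antipode (R := ℂ))))
      (comul2 Q q))

/-- The linear map `Q →ₗ H`, `x ↦ a ⊗ x ⊗ 1`. -/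
def cmLegL {Q A : Type*} [Ring Q] [HopfAlgebra ℂ Q] [Ring A] [Algebra ℂ A] (a : A) :
    Q →ₗ[ℂ] A ⊗[ℂ] (Q ⊗[ℂ] A) :=
  (TensorProduct.mk ℂ A (Q ⊗[ℂ] A) a).comp ((TensorProduct.mk ℂ Q A).flip 1)

/-- The linear map `Q →ₗ H`, `x ↦ 1 ⊗ x ⊗ b`. -/
def cmLegR {Q A : Type*} [Ring Q] [HopfAlgebra ℂ Q] [Ring A] [Algebra ℂ A] (b : A) :
    Q →ₗ[ℂ] A ⊗[ℂ] (Q ⊗[ℂ] A) :=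
  (TensorProduct.mk ℂ A (Q ⊗[ℂ] A) 1).comp ((TensorProduct.mk ℂ Q A).flip b)

/-! ### Auxiliary lemmas -/

open Coalgebra HopfAlgebra LinearMap

set_option synthInstance.maxHeartbeats 1000000
set_option maxHeartbeats 1000000

section HopfAux
variable {Q : Type*} [Ring Q] [HopfAlgebra ℂ Q]

lemma sum_smul_left_eq {q : Q} (ρ : Coalgebra.Repr ℂ q (Q × Q)) :
    ∑ i ∈ ρ.index, counit (R := ℂ) (ρ.right i) • ρ.left i = q := by
  have h := congrArg (TensorProduct.rid ℂ Q) (sum_tmul_counit_eq ρ)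
  simp only [map_sum, rid_tmul, one_smul] at h
  exact h

lemma sum_smul_right_eq {q : Q} (ρ : Coalgebra.Repr ℂ q (Q × Q)) :
    ∑ i ∈ ρ.index, counit (R := ℂ) (ρ.left i) • ρ.right i = q := by
  have h := congrArg (TensorProduct.lid ℂ Q) (sum_counit_tmul_eq ρ)
  simp only [map_sum, lid_tmul, one_smul] at h
  exact h

lemma counit_antipode (q : Q) :
    counit (R := ℂ) (antipode (R := ℂ) q) = counit (R := ℂ) q := by
  have ρ := ℛ ℂ q
  have h2 := congrArg (counit (R := ℂ)) (sum_antipode_mul_eq_smul ρ)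
  simp only [map_sum, Bialgebra.counit_mul, map_smul, Bialgebra.counit_one, smul_eq_mul,
    mul_one] at h2
  calc counit (R := ℂ) (antipode (R := ℂ) q)
      = counit (R := ℂ) (antipode (R := ℂ) (∑ i ∈ ρ.index,
          counit (R := ℂ) (ρ.right i) • ρ.left i)) := by rw [sum_smul_left_eq ρ]
    _ = ∑ i ∈ ρ.index, counit (R := ℂ) (antipode (R := ℂ) (ρ.left i)) *
          counit (R := ℂ) (ρ.right i) := by
        simp [map_sum, map_smul, smul_eq_mul, mul_comm]
    _ = counit (R := ℂ) q := h2

variable {B : Type*} [Ring B] [Algebra ℂ B]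

/-- Convolution product on `Hom(Q, B)`. -/
def conv (f g : Q →ₗ[ℂ] B) : Q →ₗ[ℂ] B :=
  (LinearMap.mul' ℂ B) ∘ₗ (TensorProduct.map f g) ∘ₗ (Coalgebra.comul (R := ℂ))

lemma conv_apply (f g : Q →ₗ[ℂ] B) {q : Q} (ρ : Coalgebra.Repr ℂ q (Q × Q)) :
    conv f g q = ∑ i ∈ ρ.index, f (ρ.left i) * g (ρ.right i) := by
  simp [conv, ← ρ.eq, map_sum]

/-- Convolution unit on `Hom(Q, B)`. -/
def convUnit : Q →ₗ[ℂ] B := (Algebra.linearMap ℂ B) ∘ₗ (Coalgebra.counit (R := ℂ))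

lemma convUnit_apply (q : Q) :
    (convUnit : Q →ₗ[ℂ] B) q = algebraMap ℂ B (counit (R := ℂ) q) := rfl

lemma conv_unit_left (f : Q →ₗ[ℂ] B) : conv convUnit f = f := by
  ext q
  have ρ := ℛ ℂ q
  rw [conv_apply _ _ ρ]
  calc ∑ i ∈ ρ.index, convUnit (ρ.left i) * f (ρ.right i)
      = ∑ i ∈ ρ.index, counit (R := ℂ) (ρ.left i) • f (ρ.right i) := by
        simp [convUnit, Algebra.smul_def]
    _ = f q := by
        conv_rhs => rw [← sum_smul_right_eq ρ]
        simp [map_sum, map_smul]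

lemma conv_unit_right (f : Q →ₗ[ℂ] B) : conv f convUnit = f := by
  ext q
  have ρ := ℛ ℂ q
  rw [conv_apply _ _ ρ]
  calc ∑ i ∈ ρ.index, f (ρ.left i) * convUnit (ρ.right i)
      = ∑ i ∈ ρ.index, counit (R := ℂ) (ρ.right i) • f (ρ.left i) := by
        simp [convUnit, Algebra.smul_def, ← Algebra.commutes]
    _ = f q := by
        conv_rhs => rw [← sum_smul_left_eq ρ]
        simp [map_sum, map_smul]

lemma conv_assoc (f g h : Q →ₗ[ℂ] B) : conv (conv f g) h = conv f (conv g h) := by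
  ext q
  have ρ := ℛ ℂ q
  have a₁ : (i : ρ.ι) → Coalgebra.Repr ℂ (ρ.left i) (Q × Q) := fun i => ℛ ℂ (ρ.left i)
  have a₂ : (i : ρ.ι) → Coalgebra.Repr ℂ (ρ.right i) (Q × Q) := fun i => ℛ ℂ (ρ.right i)
  have key := sum_map_tmul_tmul_eq f g h q (repr := ρ) (a₁ := a₁) (a₂ := a₂)
  have key2 := congrArg ((LinearMap.mul' ℂ B) ∘ₗ (LinearMap.lTensor B (LinearMap.mul' ℂ B))) key
  simp only [map_sum, LinearMap.coe_comp, Function.comp_apply, lTensor_tmul,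
    LinearMap.mul'_apply] at key2
  have e1 : ∀ i ∈ ρ.index, conv f g (ρ.left i) * h (ρ.right i) =
      ∑ j ∈ (a₁ i).index, f ((a₁ i).left j) * (g ((a₁ i).right j) * h (ρ.right i)) :=
    fun i _ => by rw [conv_apply f g (a₁ i), Finset.sum_mul]; simp [mul_assoc]
  have e2 : ∀ i ∈ ρ.index, f (ρ.left i) * conv g h (ρ.right i) =
      ∑ j ∈ (a₂ i).index, f (ρ.left i) * (g ((a₂ i).left j) * h ((a₂ i).right j)) :=
    fun i _ => by rw [conv_apply g h (a₂ i), Finset.mul_sum]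
  rw [conv_apply (conv f g) h ρ, conv_apply f (conv g h) ρ,
    Finset.sum_congr rfl e1, Finset.sum_congr rfl e2]
  exact key2.symm

/-- `v ⊗ t ↦ T v * t`. -/
def antipodeMulL (Q : Type*) [Ring Q] [HopfAlgebra ℂ Q] :
    Q ⊗[ℂ] Q →ₗ[ℂ] Q :=
  (LinearMap.mul' ℂ Q) ∘ₗ (LinearMap.rTensor Q (antipode (R := ℂ)))

@[simp] lemma antipodeMulL_tmul (v t : Q) :
    antipodeMulL Q (v ⊗ₜ[ℂ] t) = antipode (R := ℂ) v * t := by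
  simp [antipodeMulL]

/-- `p ⊗ (v ⊗ t) ↦ Σ_{Δp} (T p₂ * v) ⊗ (T p₁ * t)`. -/
def Vmap (Q : Type*) [Ring Q] [HopfAlgebra ℂ Q] :
    Q ⊗[ℂ] (Q ⊗[ℂ] Q) →ₗ[ℂ] Q ⊗[ℂ] Q :=
  (TensorProduct.map (antipodeMulL Q) (antipodeMulL Q)) ∘ₗ
    (TensorProduct.tensorTensorTensorComm ℂ Q Q Q Q).toLinearMap ∘ₗ
    (LinearMap.rTensor (Q ⊗[ℂ] Q)
      ((TensorProduct.comm ℂ Q Q).toLinearMap ∘ₗ (Coalgebra.comul (R := ℂ))))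

lemma Vmap_tmul (p v t : Q) (π : Coalgebra.Repr ℂ p (Q × Q)) :
    Vmap Q (p ⊗ₜ[ℂ] (v ⊗ₜ[ℂ] t)) =
      ∑ j ∈ π.index, (antipode (R := ℂ) (π.right j) * v) ⊗ₜ[ℂ]
        (antipode (R := ℂ) (π.left j) * t) := by
  simp only [Vmap, LinearMap.coe_comp, Function.comp_apply, rTensor_tmul,
    LinearMap.coe_comp, LinearEquiv.coe_coe, ← π.eq, map_sum, comm_tmul, sum_tmul,
    tensorTensorTensorComm_tmul, TensorProduct.map_tmul, antipodeMulL_tmul]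

/-- `u ⊗ (w ⊗ t) ↦ (T w * t) ⊗ (T u * r)`. -/
def V2map (r : Q) : Q ⊗[ℂ] (Q ⊗[ℂ] Q) →ₗ[ℂ] Q ⊗[ℂ] Q :=
  (TensorProduct.map (antipodeMulL Q) ((LinearMap.mulRight ℂ r) ∘ₗ (antipode (R := ℂ)))) ∘ₗ
    (TensorProduct.comm ℂ Q (Q ⊗[ℂ] Q)).toLinearMap

@[simp] lemma V2map_tmul (r u w t : Q) :
    V2map r (u ⊗ₜ[ℂ] (w ⊗ₜ[ℂ] t)) =
      (antipode (R := ℂ) w * t) ⊗ₜ[ℂ] (antipode (R := ℂ) u * r) := by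
  simp [V2map]

/-- `q ↦ Σ T(q₂) ⊗ T(q₁)`. -/
def Fmap (Q : Type*) [Ring Q] [HopfAlgebra ℂ Q] : Q →ₗ[ℂ] Q ⊗[ℂ] Q :=
  (TensorProduct.comm ℂ Q Q).toLinearMap ∘ₗ
    (TensorProduct.map (antipode (R := ℂ)) (antipode (R := ℂ))) ∘ₗ (Coalgebra.comul (R := ℂ))

lemma Fmap_apply {q : Q} (ρ : Coalgebra.Repr ℂ q (Q × Q)) :
    Fmap Q q = ∑ i ∈ ρ.index,
      (antipode (R := ℂ) (ρ.right i)) ⊗ₜ[ℂ] (antipode (R := ℂ) (ρ.left i)) := by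
  simp [Fmap, ← ρ.eq, map_sum]

lemma conv_Fmap_comul :
    conv (Fmap Q) (Coalgebra.comul (R := ℂ)) = convUnit := by
  ext q
  have ρ := ℛ ℂ q
  have σ : (i : ρ.ι) → Coalgebra.Repr ℂ (ρ.left i) (Q × Q) := fun i => ℛ ℂ (ρ.left i)
  have τ : (i : ρ.ι) → Coalgebra.Repr ℂ (ρ.right i) (Q × Q) := fun i => ℛ ℂ (ρ.right i)
  have ν : (i : ρ.ι) → (j : (σ i).ι) → Coalgebra.Repr ℂ ((σ i).left j) (Q × Q) := fun i j => ℛ ℂ ((σ i).left j)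
  have ξ : (i : ρ.ι) → (j : (σ i).ι) → Coalgebra.Repr ℂ ((σ i).right j) (Q × Q) := fun i j => ℛ ℂ ((σ i).right j)
  rw [conv_apply _ _ ρ]
  have step1 : ∀ i ∈ ρ.index, Fmap Q (ρ.left i) * Coalgebra.comul (R := ℂ) (ρ.right i)
      = ∑ k ∈ (τ i).index, Vmap Q ((ρ.left i) ⊗ₜ[ℂ] ((τ i).left k ⊗ₜ[ℂ] (τ i).right k)) := by
    intro i _
    rw [Fmap_apply (σ i), ← (τ i).eq, Finset.sum_mul_sum]
    rw [Finset.sum_comm]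
    refine Finset.sum_congr rfl fun k _ => ?_
    rw [Vmap_tmul _ _ _ (σ i)]
    simp [Algebra.TensorProduct.tmul_mul_tmul]
  rw [Finset.sum_congr rfl step1]
  have I₁ := sum_tmul_tmul_eq ρ σ τ
  have I₁' := congrArg (Vmap Q) I₁
  simp only [map_sum] at I₁'
  rw [← I₁']
  have step2 : ∀ i ∈ ρ.index,
      ∑ j ∈ (σ i).index, Vmap Q ((σ i).left j ⊗ₜ[ℂ] ((σ i).right j ⊗ₜ[ℂ] ρ.right i))
      = (1 : Q) ⊗ₜ[ℂ] (antipode (R := ℂ) (ρ.left i) * ρ.right i) := by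
    intro i _
    have e1 : ∀ j ∈ (σ i).index,
        Vmap Q ((σ i).left j ⊗ₜ[ℂ] ((σ i).right j ⊗ₜ[ℂ] ρ.right i))
        = ∑ l ∈ (ν i j).index,
            V2map (ρ.right i) ((ν i j).left l ⊗ₜ[ℂ] ((ν i j).right l ⊗ₜ[ℂ] (σ i).right j)) := by
      intro j _
      rw [Vmap_tmul _ _ _ (ν i j)]
      simp [V2map_tmul]
    rw [Finset.sum_congr rfl e1]
    have I₂ := sum_tmul_tmul_eq (σ i) (ν i) (ξ i)
    have I₂' := congrArg (V2map (ρ.right i)) I₂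
    simp only [map_sum] at I₂'
    rw [I₂']
    have e2 : ∀ j ∈ (σ i).index,
        ∑ l ∈ (ξ i j).index,
          V2map (ρ.right i) ((σ i).left j ⊗ₜ[ℂ] ((ξ i j).left l ⊗ₜ[ℂ] (ξ i j).right l))
        = counit (R := ℂ) ((σ i).right j) •
            ((1 : Q) ⊗ₜ[ℂ] (antipode (R := ℂ) ((σ i).left j) * ρ.right i)) := by
      intro j _
      simp only [V2map_tmul]
      rw [← sum_tmul, sum_antipode_mul_eq_smul (ξ i j), smul_tmul']
    rw [Finset.sum_congr rfl e2]
    calc ∑ j ∈ (σ i).index, counit (R := ℂ) ((σ i).right j) •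
            ((1 : Q) ⊗ₜ[ℂ] (antipode (R := ℂ) ((σ i).left j) * ρ.right i))
        = ∑ j ∈ (σ i).index, ((TensorProduct.mk ℂ Q Q 1) ∘ₗ (LinearMap.mulRight ℂ (ρ.right i))
            ∘ₗ (antipode (R := ℂ))) (counit (R := ℂ) ((σ i).right j) • (σ i).left j) := by
          simp [map_smul]
      _ = ((TensorProduct.mk ℂ Q Q 1) ∘ₗ (LinearMap.mulRight ℂ (ρ.right i))
            ∘ₗ (antipode (R := ℂ))) (ρ.left i) := by
          rw [← map_sum, sum_smul_left_eq (σ i)]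
      _ = (1 : Q) ⊗ₜ[ℂ] (antipode (R := ℂ) (ρ.left i) * ρ.right i) := by simp
  rw [Finset.sum_congr rfl step2, ← tmul_sum, sum_antipode_mul_eq_smul ρ]
  simp [convUnit_apply, Algebra.TensorProduct.one_def, Algebra.algebraMap_eq_smul_one, smul_tmul']

lemma conv_comul_Gmap :
    conv (Coalgebra.comul (R := ℂ)) ((Coalgebra.comul (R := ℂ)) ∘ₗ (antipode (R := ℂ)) :
      Q →ₗ[ℂ] Q ⊗[ℂ] Q) = convUnit := by
  ext q
  have ρ := ℛ ℂ q
  rw [conv_apply _ _ ρ, convUnit_apply]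
  calc ∑ i ∈ ρ.index, Coalgebra.comul (R := ℂ) (ρ.left i) *
        ((Coalgebra.comul (R := ℂ)) ∘ₗ (antipode (R := ℂ))) (ρ.right i)
      = Coalgebra.comul (R := ℂ) (∑ i ∈ ρ.index, ρ.left i * antipode (R := ℂ) (ρ.right i)) := by
        rw [map_sum]
        exact Finset.sum_congr rfl fun i _ => by
          simp only [LinearMap.coe_comp, Function.comp_apply]
          exact (Bialgebra.comul_mul _ _).symm
    _ = algebraMap ℂ (Q ⊗[ℂ] Q) (counit (R := ℂ) q) := by
        rw [sum_mul_antipode_eq_smul ρ]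
        simp [Algebra.algebraMap_eq_smul_one, map_smul, Bialgebra.comul_one]

lemma comul_antipode (q : Q) :
    Coalgebra.comul (R := ℂ) (antipode (R := ℂ) q) =
      TensorProduct.comm ℂ Q Q (TensorProduct.map (antipode (R := ℂ)) (antipode (R := ℂ))
        (Coalgebra.comul (R := ℂ) q)) := by
  have hFG : Fmap Q = (Coalgebra.comul (R := ℂ)) ∘ₗ (antipode (R := ℂ)) := by
    calc Fmap Q = conv (Fmap Q) convUnit := (conv_unit_right _).symm
      _ = conv (Fmap Q) (conv (Coalgebra.comul (R := ℂ))
            ((Coalgebra.comul (R := ℂ)) ∘ₗ (antipode (R := ℂ)))) := by rw [conv_comul_Gmap]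
      _ = conv (conv (Fmap Q) (Coalgebra.comul (R := ℂ)))
            ((Coalgebra.comul (R := ℂ)) ∘ₗ (antipode (R := ℂ))) := (conv_assoc _ _ _).symm
      _ = conv convUnit ((Coalgebra.comul (R := ℂ)) ∘ₗ (antipode (R := ℂ))) := by
            rw [conv_Fmap_comul]
      _ = (Coalgebra.comul (R := ℂ)) ∘ₗ (antipode (R := ℂ)) := conv_unit_left _
  have := LinearMap.congr_fun hFG q
  simp only [LinearMap.coe_comp, Function.comp_apply] at this
  rw [← this]
  simp [Fmap]

end HopfAux

section CMAux
variable {Q A : Type*} [Ring Q] [HopfAlgebra ℂ Q] [Ring A] [Algebra ℂ A]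

@[simp] lemma cmRev_tmul (u : A) (p : Q) (w : A) :
    cmRev (u ⊗ₜ[ℂ] (p ⊗ₜ[ℂ] w)) = w ⊗ₜ[ℂ] (p ⊗ₜ[ℂ] u) := by
  simp [cmRev]

lemma comul2_repr (x : Q) (σ : Coalgebra.Repr ℂ x (Q × Q)) (κ : (j : σ.ι) → Coalgebra.Repr ℂ (σ.right j) (Q × Q)) :
    comul2 Q x = ∑ j ∈ σ.index, ∑ k ∈ (κ j).index,
      σ.left j ⊗ₜ[ℂ] ((κ j).left k ⊗ₜ[ℂ] (κ j).right k) := by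
  simp only [comul2, LinearMap.comp_apply, ← σ.eq, map_sum, lTensor_tmul]
  exact Finset.sum_congr rfl fun j _ => by rw [← (κ j).eq, tmul_sum]

lemma S_left (act : Q →ₗ[ℂ] A →ₗ[ℂ] A)
    (hact_alg_one : ∀ q : Q, act q 1 = Coalgebra.counit (R := ℂ) q • (1 : A))
    (a : A) (x : Q) (σ : Coalgebra.Repr ℂ x (Q × Q)) :
    cmAntipodeRHS act a x (1 : A) =
      ∑ j ∈ σ.index, (1 : A) ⊗ₜ[ℂ] ((antipode (R := ℂ) (σ.right j)) ⊗ₜ[ℂ]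
        act (antipode (R := ℂ) (σ.left j)) a) := by
  have κ : (j : σ.ι) → Coalgebra.Repr ℂ (σ.right j) (Q × Q) := fun j => ℛ ℂ (σ.right j)
  unfold cmAntipodeRHS
  rw [comul2_repr x σ κ]
  simp only [map_sum, TensorProduct.map_tmul, LinearMap.comp_apply, cmRev_tmul]
  refine Finset.sum_congr rfl fun j _ => ?_
  calc ∑ k ∈ (κ j).index,
        (act (antipode (R := ℂ) ((κ j).right k)) 1) ⊗ₜ[ℂ]
          ((antipode (R := ℂ) ((κ j).left k)) ⊗ₜ[ℂ] act (antipode (R := ℂ) (σ.left j)) a)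
      = ∑ k ∈ (κ j).index, ((TensorProduct.mk ℂ A (Q ⊗[ℂ] A) 1) ∘ₗ
          ((TensorProduct.mk ℂ Q A).flip (act (antipode (R := ℂ) (σ.left j)) a)) ∘ₗ
          (antipode (R := ℂ))) (counit (R := ℂ) ((κ j).right k) • (κ j).left k) := by
        refine Finset.sum_congr rfl fun k _ => ?_
        rw [hact_alg_one, _root_.counit_antipode]
        simp [map_smul, smul_tmul']
    _ = (1 : A) ⊗ₜ[ℂ] ((antipode (R := ℂ) (σ.right j)) ⊗ₜ[ℂ]
          act (antipode (R := ℂ) (σ.left j)) a) := by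
        rw [← map_sum, sum_smul_left_eq (κ j)]
        simp

lemma cmMul_right (act : Q →ₗ[ℂ] A →ₗ[ℂ] A)
    (hact_alg_one : ∀ q : Q, act q 1 = Coalgebra.counit (R := ℂ) q • (1 : A))
    (p : Q) (c : A) (y : Q) (b : A) :
    cmMulRHS act (1 : A) p c (1 : A) y b =
      (1 : A) ⊗ₜ[ℂ] (TensorProduct.map (LinearMap.mulRight ℂ y)
        ((LinearMap.mulRight ℂ c) ∘ₗ (act.flip b)) (Coalgebra.comul (R := ℂ) p)) := by
  have π := ℛ ℂ p
  have κ : (j : π.ι) → Coalgebra.Repr ℂ (π.right j) (Q × Q) := fun j => ℛ ℂ (π.right j)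
  set Φ : Q ⊗[ℂ] Q →ₗ[ℂ] Q ⊗[ℂ] A := TensorProduct.map (LinearMap.mulRight ℂ y)
    ((LinearMap.mulRight ℂ c) ∘ₗ (act.flip b)) with hΦ
  unfold cmMulRHS
  rw [comul2_repr p π κ]
  simp only [map_sum, TensorProduct.map_tmul, LinearMap.comp_apply]
  calc ∑ j ∈ π.index, ∑ k ∈ (κ j).index,
        ((LinearMap.mulLeft ℂ (1 : A)) (act.flip (1 : A) (π.left j))) ⊗ₜ[ℂ]
          (Φ ((κ j).left k ⊗ₜ[ℂ] (κ j).right k))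
      = ∑ j ∈ π.index, ((TensorProduct.mk ℂ A (Q ⊗[ℂ] A) 1) ∘ₗ Φ ∘ₗ
          (Coalgebra.comul (R := ℂ))) (counit (R := ℂ) (π.left j) • π.right j) := by
        refine Finset.sum_congr rfl fun j _ => ?_
        simp only [LinearMap.mulLeft_apply, LinearMap.flip_apply, hact_alg_one, one_mul,
          LinearMap.comp_apply, map_smul, ← (κ j).eq, map_sum, tmul_sum, Finset.smul_sum,
          TensorProduct.mk_apply, smul_tmul']
    _ = (1 : A) ⊗ₜ[ℂ] (Φ (Coalgebra.comul (R := ℂ) p)) := by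
        rw [← map_sum, sum_smul_right_eq π]
        simp

/-- `p ⊗ (v ⊗ t) ↦ Σ_{Δv} (T v₂ * t) ⊗ (T v₁ · b)(T p · a)`. -/
def WmapA (act : Q →ₗ[ℂ] A →ₗ[ℂ] A) (a b : A) : Q ⊗[ℂ] (Q ⊗[ℂ] Q) →ₗ[ℂ] Q ⊗[ℂ] A :=
  (TensorProduct.map (antipodeMulL Q)
      ((LinearMap.mul' ℂ A) ∘ₗ (TensorProduct.map ((act.flip b) ∘ₗ (antipode (R := ℂ)))
        ((act.flip a) ∘ₗ (antipode (R := ℂ)))))) ∘ₗ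
    (TensorProduct.assoc ℂ (Q ⊗[ℂ] Q) Q Q).toLinearMap ∘ₗ
    (LinearMap.rTensor Q ((TensorProduct.comm ℂ Q (Q ⊗[ℂ] Q)).toLinearMap ∘ₗ
      (TensorProduct.assoc ℂ Q Q Q).toLinearMap)) ∘ₗ
    (TensorProduct.comm ℂ Q ((Q ⊗[ℂ] Q) ⊗[ℂ] Q)).toLinearMap ∘ₗ
    (LinearMap.lTensor Q (LinearMap.rTensor Q (Coalgebra.comul (R := ℂ))))

lemma WmapA_tmul (act : Q →ₗ[ℂ] A →ₗ[ℂ] A) (a b : A) (p v t : Q) (κ : Coalgebra.Repr ℂ v (Q × Q)) :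
    WmapA act a b (p ⊗ₜ[ℂ] (v ⊗ₜ[ℂ] t)) =
      ∑ j ∈ κ.index, (antipode (R := ℂ) (κ.right j) * t) ⊗ₜ[ℂ]
        ((act (antipode (R := ℂ) (κ.left j)) b) * (act (antipode (R := ℂ) p) a)) := by
  simp only [WmapA, LinearMap.coe_comp, Function.comp_apply, LinearEquiv.coe_coe,
    lTensor_tmul, rTensor_tmul, ← κ.eq, map_sum, sum_tmul, tmul_sum, comm_tmul, assoc_tmul,
    TensorProduct.map_tmul, antipodeMulL_tmul, LinearMap.mul'_apply, LinearMap.flip_apply]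

lemma key1 (act : Q →ₗ[ℂ] A →ₗ[ℂ] A)
    (hact_alg_one : ∀ q : Q, act q 1 = Coalgebra.counit (R := ℂ) q • (1 : A))
    (m : (A ⊗[ℂ] (Q ⊗[ℂ] A)) →ₗ[ℂ] (A ⊗[ℂ] (Q ⊗[ℂ] A)) →ₗ[ℂ] (A ⊗[ℂ] (Q ⊗[ℂ] A)))
    (hm : ∀ (a : A) (q : Q) (b a' : A) (q' : Q) (b' : A),
      m (a ⊗ₜ[ℂ] (q ⊗ₜ[ℂ] b)) (a' ⊗ₜ[ℂ] (q' ⊗ₜ[ℂ] b')) = cmMulRHS act a q b a' q' b')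
    (S : (A ⊗[ℂ] (Q ⊗[ℂ] A)) →ₗ[ℂ] (A ⊗[ℂ] (Q ⊗[ℂ] A)))
    (hS : ∀ (a : A) (q : Q) (b : A),
      S (a ⊗ₜ[ℂ] (q ⊗ₜ[ℂ] b)) = cmAntipodeRHS act a q b)
    (a b : A) (x y : Q) :
    m (S (a ⊗ₜ[ℂ] (x ⊗ₜ[ℂ] (1 : A)))) ((1 : A) ⊗ₜ[ℂ] (y ⊗ₜ[ℂ] b)) =
      (1 : A) ⊗ₜ[ℂ] (WmapA act a b ((TensorProduct.assoc ℂ Q Q Q)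
        ((Coalgebra.comul (R := ℂ) x) ⊗ₜ[ℂ] y))) := by
  have σ := ℛ ℂ x
  have κ : (j : σ.ι) → Coalgebra.Repr ℂ (σ.right j) (Q × Q) := fun j => ℛ ℂ (σ.right j)
  rw [hS, S_left act hact_alg_one a x σ, map_sum, LinearMap.sum_apply]
  have lhs_eq : ∀ j ∈ σ.index,
      m ((1 : A) ⊗ₜ[ℂ] ((antipode (R := ℂ) (σ.right j)) ⊗ₜ[ℂ]
          act (antipode (R := ℂ) (σ.left j)) a)) ((1 : A) ⊗ₜ[ℂ] (y ⊗ₜ[ℂ] b)) =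
      (1 : A) ⊗ₜ[ℂ] (∑ k ∈ (κ j).index,
        (antipode (R := ℂ) ((κ j).right k) * y) ⊗ₜ[ℂ]
          ((act (antipode (R := ℂ) ((κ j).left k)) b) *
            (act (antipode (R := ℂ) (σ.left j)) a))) := by
    intro j _
    rw [hm, cmMul_right act hact_alg_one, comul_antipode]
    congr 1
    rw [← (κ j).eq]
    simp only [map_sum, comm_tmul, TensorProduct.map_tmul, LinearMap.comp_apply,
      LinearMap.mulRight_apply, LinearMap.flip_apply]
  rw [Finset.sum_congr rfl lhs_eq]
  rw [← σ.eq, sum_tmul, map_sum, map_sum, tmul_sum]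
  refine Finset.sum_congr rfl fun j _ => ?_
  rw [assoc_tmul, WmapA_tmul act a b _ _ _ (κ j)]

/-- `u ⊗ (w ⊗ t) ↦ (T w * t) ⊗ (act (T u) b * c)`. -/
def V2A (act : Q →ₗ[ℂ] A →ₗ[ℂ] A) (b c : A) : Q ⊗[ℂ] (Q ⊗[ℂ] Q) →ₗ[ℂ] Q ⊗[ℂ] A :=
  (TensorProduct.map (antipodeMulL Q)
      ((LinearMap.mulRight ℂ c) ∘ₗ (act.flip b) ∘ₗ (antipode (R := ℂ)))) ∘ₗ
    (TensorProduct.comm ℂ Q (Q ⊗[ℂ] Q)).toLinearMap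

@[simp] lemma V2A_tmul (act : Q →ₗ[ℂ] A →ₗ[ℂ] A) (b c : A) (u w t : Q) :
    V2A act b c (u ⊗ₜ[ℂ] (w ⊗ₜ[ℂ] t)) =
      (antipode (R := ℂ) w * t) ⊗ₜ[ℂ] (act (antipode (R := ℂ) u) b * c) := by
  simp [V2A]

end CMAux

theorem cm_antipode_axiom_left
    {Q A : Type*} [Ring Q] [HopfAlgebra ℂ Q] [Ring A] [Algebra ℂ A]
    (act : Q →ₗ[ℂ] A →ₗ[ℂ] A)
    (hact_one : ∀ a : A, act 1 a = a)
    (hact_mul : ∀ (q q' : Q) (a : A), act (q * q') a = act q (act q' a))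
    (hact_alg_mul : ∀ (q : Q) (a a' : A),
      act q (a * a') =
        LinearMap.mul' ℂ A
          (TensorProduct.map (act.flip a) (act.flip a') (Coalgebra.comul (R := ℂ) q)))
    (hact_alg_one : ∀ q : Q, act q 1 = Coalgebra.counit (R := ℂ) q • (1 : A))
    (hT : ∀ q : Q, HopfAlgebra.antipode (R := ℂ) (HopfAlgebra.antipode (R := ℂ) q) = q)
    -- the Connes–Moscovici multiplication on `H`:
    (m : (A ⊗[ℂ] (Q ⊗[ℂ] A)) →ₗ[ℂ] (A ⊗[ℂ] (Q ⊗[ℂ] A)) →ₗ[ℂ] (A ⊗[ℂ] (Q ⊗[ℂ] A)))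
    (hm : ∀ (a : A) (q : Q) (b a' : A) (q' : Q) (b' : A),
      m (a ⊗ₜ[ℂ] (q ⊗ₜ[ℂ] b)) (a' ⊗ₜ[ℂ] (q' ⊗ₜ[ℂ] b')) = cmMulRHS act a q b a' q' b')
    -- the antipode of `H`:
    (S : (A ⊗[ℂ] (Q ⊗[ℂ] A)) →ₗ[ℂ] (A ⊗[ℂ] (Q ⊗[ℂ] A)))
    (hS : ∀ (a : A) (q : Q) (b : A),
      S (a ⊗ₜ[ℂ] (q ⊗ₜ[ℂ] b)) = cmAntipodeRHS act a q b) :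
    ∀ (a : A) (q : Q) (b : A),
      TensorProduct.lift ((m.comp (S.comp (cmLegL a))).compl₂ (cmLegR b))
          (Coalgebra.comul (R := ℂ) q) =
        (1 : A) ⊗ₜ[ℂ] ((1 : Q) ⊗ₜ[ℂ] act (HopfAlgebra.antipode (R := ℂ) q) (b * a)) := by
  intro a q b
  have ρ := ℛ ℂ q
  have σ : (i : ρ.ι) → Coalgebra.Repr ℂ (ρ.left i) (Q × Q) := fun i => ℛ ℂ (ρ.left i)
  have τ : (i : ρ.ι) → Coalgebra.Repr ℂ (ρ.right i) (Q × Q) := fun i => ℛ ℂ (ρ.right i)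
  have ν : (i : ρ.ι) → (k : (τ i).ι) → Coalgebra.Repr ℂ ((τ i).left k) (Q × Q) :=
    fun i k => ℛ ℂ ((τ i).left k)
  have ξ : (i : ρ.ι) → (k : (τ i).ι) → Coalgebra.Repr ℂ ((τ i).right k) (Q × Q) :=
    fun i k => ℛ ℂ ((τ i).right k)
  conv_lhs => rw [← ρ.eq]
  rw [map_sum]
  have e0 : ∀ i ∈ ρ.index,
      TensorProduct.lift ((m.comp (S.comp (cmLegL a))).compl₂ (cmLegR b))
        (ρ.left i ⊗ₜ[ℂ] ρ.right i)
      = (1 : A) ⊗ₜ[ℂ] (WmapA act a b ((TensorProduct.assoc ℂ Q Q Q)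
          ((Coalgebra.comul (R := ℂ) (ρ.left i)) ⊗ₜ[ℂ] ρ.right i))) := by
    intro i _
    rw [TensorProduct.lift.tmul]
    simp only [LinearMap.compl₂_apply, LinearMap.comp_apply, cmLegL, cmLegR,
      TensorProduct.mk_apply, LinearMap.flip_apply]
    exact key1 act hact_alg_one m hm S hS a b (ρ.left i) (ρ.right i)
  rw [Finset.sum_congr rfl e0, ← tmul_sum]
  congr 1
  -- remaining: Σᵢ WmapA(assoc(Δxᵢ ⊗ yᵢ)) = 1 ⊗ act (T q) (b * a)
  have h1 : ∀ i ∈ ρ.index,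
      WmapA act a b ((TensorProduct.assoc ℂ Q Q Q)
        ((Coalgebra.comul (R := ℂ) (ρ.left i)) ⊗ₜ[ℂ] ρ.right i))
      = ∑ j ∈ (σ i).index, WmapA act a b
          ((σ i).left j ⊗ₜ[ℂ] ((σ i).right j ⊗ₜ[ℂ] ρ.right i)) := by
    intro i _
    rw [← (σ i).eq, sum_tmul, map_sum, map_sum]
    exact Finset.sum_congr rfl fun j _ => by rw [assoc_tmul]
  rw [Finset.sum_congr rfl h1]
  have I₁ := sum_tmul_tmul_eq ρ σ τ
  have I₁' := congrArg (WmapA act a b) I₁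
  simp only [map_sum] at I₁'
  rw [I₁']
  have h2 : ∀ i ∈ ρ.index,
      ∑ k ∈ (τ i).index, WmapA act a b
          (ρ.left i ⊗ₜ[ℂ] ((τ i).left k ⊗ₜ[ℂ] (τ i).right k))
      = (1 : Q) ⊗ₜ[ℂ] (act (antipode (R := ℂ) (ρ.right i)) b *
          act (antipode (R := ℂ) (ρ.left i)) a) := by
    intro i _
    have e1 : ∀ k ∈ (τ i).index,
        WmapA act a b (ρ.left i ⊗ₜ[ℂ] ((τ i).left k ⊗ₜ[ℂ] (τ i).right k))
        = ∑ j ∈ (ν i k).index, V2A act b (act (antipode (R := ℂ) (ρ.left i)) a)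
            ((ν i k).left j ⊗ₜ[ℂ] ((ν i k).right j ⊗ₜ[ℂ] (τ i).right k)) := by
      intro k _
      rw [WmapA_tmul act a b _ _ _ (ν i k)]
      simp only [V2A_tmul]
    rw [Finset.sum_congr rfl e1]
    have I₂ := sum_tmul_tmul_eq (τ i) (ν i) (ξ i)
    have I₂' := congrArg (V2A act b (act (antipode (R := ℂ) (ρ.left i)) a)) I₂
    simp only [map_sum] at I₂'
    rw [I₂']
    have e2 : ∀ k ∈ (τ i).index,
        ∑ j ∈ (ξ i k).index, V2A act b (act (antipode (R := ℂ) (ρ.left i)) a)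
            ((τ i).left k ⊗ₜ[ℂ] ((ξ i k).left j ⊗ₜ[ℂ] (ξ i k).right j))
        = counit (R := ℂ) ((τ i).right k) • ((1 : Q) ⊗ₜ[ℂ]
            (act (antipode (R := ℂ) ((τ i).left k)) b *
              act (antipode (R := ℂ) (ρ.left i)) a)) := by
      intro k _
      simp only [V2A_tmul]
      rw [← sum_tmul, sum_antipode_mul_eq_smul (ξ i k), smul_tmul']
    rw [Finset.sum_congr rfl e2]
    calc ∑ k ∈ (τ i).index, counit (R := ℂ) ((τ i).right k) • ((1 : Q) ⊗ₜ[ℂ]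
            (act (antipode (R := ℂ) ((τ i).left k)) b *
              act (antipode (R := ℂ) (ρ.left i)) a))
        = ∑ k ∈ (τ i).index, ((TensorProduct.mk ℂ Q A 1) ∘ₗ
            (LinearMap.mulRight ℂ (act (antipode (R := ℂ) (ρ.left i)) a)) ∘ₗ
            (act.flip b) ∘ₗ (antipode (R := ℂ)))
            (counit (R := ℂ) ((τ i).right k) • (τ i).left k) := by
          simp [map_smul]
      _ = (1 : Q) ⊗ₜ[ℂ] (act (antipode (R := ℂ) (ρ.right i)) b *
            act (antipode (R := ℂ) (ρ.left i)) a) := by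
          rw [← map_sum, sum_smul_left_eq (τ i)]
          simp
  rw [Finset.sum_congr rfl h2]
  -- RHS
  rw [hact_alg_mul, comul_antipode, ← ρ.eq]
  simp only [map_sum, comm_tmul, TensorProduct.map_tmul, LinearMap.mul'_apply,
    LinearMap.flip_apply, tmul_sum]

end
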